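/- Same interference property of capacity achieving ULDCs (Lemma 3, Property 2(a)): let N ≥ 2, K ≥ 2, and consider a universal locally decodable code (ULDC) with locality N, K source symbols of entropy L_w > 0, M coded symbols of entropy L_x, and symbol rate L_w/L_x = C*(N,K). Then for every k ∈ {1,…,K}, every decoding set S ∈ 𝒮_k, every pair of distinct indices i₁, i₂ ∈ S, and every k' ≠ k, the coded symbols X_{i₁} and X_{i₂} contain the same information about W_{k'}: H(X_{i₁} | X_{i₂}, W_{k'̄}) = H(X_{i₂} | X_{i₁}, W_{k'̄}) = 0, where W_{k'̄} is the tuple of all source symbols other than W_{k'}. -/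

import Mathlib

open scoped BigOperators

noncomputable section

/-- A finite probability space: a finite type together with a probability mass function. -/
structure FinProbSpace where
  Ω : Type
  [fin : Fintype Ω]
  p : Ω → ℝ
  nonneg : ∀ ω, 0 ≤ p ω
  sum_one : ∑ ω, p ω = 1

attribute [instance] FinProbSpace.fin

namespace FinProbSpace

variable (P : FinProbSpace)

/-- Probability that the random variable `X` takes the value `a`. -/
def prob {α : Type} [DecidableEq α] (X : P.Ω → α) (a : α) : ℝ :=
  ∑ ω, if X ω = a then P.p ω else 0

/-- Shannon entropy (in bits) of a finitely valued random variable. -/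
def H {α : Type} [Fintype α] [DecidableEq α] (X : P.Ω → α) : ℝ :=
  ∑ a, -(P.prob X a * Real.logb 2 (P.prob X a))

/-- Conditional Shannon entropy `H(X | Y) = H(X, Y) - H(Y)` (in bits). -/
def condH {α β : Type} [Fintype α] [DecidableEq α] [Fintype β] [DecidableEq β]
    (X : P.Ω → α) (Y : P.Ω → β) : ℝ :=
  P.H (fun ω => (X ω, Y ω)) - P.H Y

/-- The tuple random variable `(X_i)_{i ∈ ι}`. -/
def tuple {ι V : Type} (X : ι → P.Ω → V) : P.Ω → ι → V := fun ω i => X i ω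

/-- Joint (mutual) independence of a finite family of random variables. -/
def iIndep {ι V : Type} [Fintype ι] [DecidableEq ι] [DecidableEq V] (X : ι → P.Ω → V) : Prop :=
  ∀ a : ι → V, P.prob (P.tuple X) a = ∏ i, P.prob (X i) (a i)

/-- `X` and `Y` contain the same information about everything beyond `Z`:
`H(X | Y, Z) = H(Y | X, Z) = 0`. -/
def sameInfo {α β γ : Type} [Fintype α] [DecidableEq α] [Fintype β] [DecidableEq β]
    [Fintype γ] [DecidableEq γ] (X : P.Ω → α) (Y : P.Ω → β) (Z : P.Ω → γ) : Prop :=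
  P.condH X (fun ω => (Y ω, Z ω)) = 0 ∧ P.condH Y (fun ω => (X ω, Z ω)) = 0

end FinProbSpace

/-- A locally decodable code with `K` source symbols of entropy `Lw`, `M` coded symbols of
entropy `Lx`, and locality `N`. -/
structure LDC (K N M : ℕ) (Lw Lx : ℝ) where
  P : FinProbSpace
  V : Type
  [fV : Fintype V]
  [dV : DecidableEq V]
  V' : Type
  [fV' : Fintype V']
  [dV' : DecidableEq V']
  /-- the source symbols -/
  W : Fin K → P.Ω → V
  /-- the coded symbols -/
  X : Fin M → P.Ω → V'
  indep : P.iIndep W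
  HW : ∀ k, P.H (W k) = Lw
  coded_fn : ∀ m, ∃ f : (Fin K → V) → V', ∀ ω, X m ω = f (fun k => W k ω)
  HX : ∀ m, P.H (X m) = Lx
  /-- the decoding supersets -/
  decSets : Fin K → Finset (Finset (Fin M))
  decSets_nonempty : ∀ k, (decSets k).Nonempty
  decSets_card : ∀ k, ∀ s ∈ decSets k, s.card = N
  decodes : ∀ k, ∀ s ∈ decSets k,
    P.condH (W k) (P.tuple fun i : {x // x ∈ s} => X i.1) = 0

attribute [instance] LDC.fV LDC.dV LDC.fV' LDC.dV'

/-- A universal LDC: every coded symbol appears in some decoding set of every source symbol. -/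
def LDC.IsUniversal {K N M : ℕ} {Lw Lx : ℝ} (C : LDC K N M Lw Lx) : Prop :=
  ∀ (m : Fin M) (k : Fin K), ∃ s ∈ C.decSets k, m ∈ s

/-- A perfectly smooth LDC: for each source symbol, every coded symbol lies in the same
number of decoding sets. -/
def LDC.IsSmooth {K N M : ℕ} {Lw Lx : ℝ} (C : LDC K N M Lw Lx) : Prop :=
  ∀ (k : Fin K) (m m' : Fin M),
    ((C.decSets k).filter (fun s => m ∈ s)).card =
      ((C.decSets k).filter (fun s => m' ∈ s)).card

/-- `C*(N, K) = N (1 + 1/N + ⋯ + 1/N^{K-1})⁻¹`. -/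
def Cstar (N K : ℕ) : ℝ := N / (∑ j ∈ Finset.range K, (1 / (N : ℝ)) ^ j)

/-- An `N`-query information retrieval scheme with `K` messages of entropy `Lw` and
answer sets of sizes `Mn n` with answers of entropy `Lx`. -/
structure IRScheme (K N : ℕ) (Mn : Fin N → ℕ) (Lw Lx : ℝ) where
  P : FinProbSpace
  V : Type
  [fV : Fintype V]
  [dV : DecidableEq V]
  V' : Type
  [fV' : Fintype V']
  [dV' : DecidableEq V']
  /-- the messages -/
  W : Fin K → P.Ω → V
  /-- `A n m` is the `m`-th possible answer of database `n` -/
  A : (n : Fin N) → Fin (Mn n) → P.Ω → V'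
  indep : P.iIndep W
  HW : ∀ k, P.H (W k) = Lw
  ans_fn : ∀ n m, ∃ f : (Fin K → V) → V', ∀ ω, A n m ω = f (fun k => W k ω)
  HA : ∀ n m, P.H (A n m) = Lx
  /-- the decoding supersets: each decoding set consists of one answer index per database -/
  Q : Fin K → Finset ((n : Fin N) → Fin (Mn n))
  Q_nonempty : ∀ k, (Q k).Nonempty
  decodes : ∀ k, ∀ q ∈ Q k, P.condH (W k) (P.tuple fun n => A n (q n)) = 0

attribute [instance] IRScheme.fV IRScheme.dV IRScheme.fV' IRScheme.dV'

/-- A repudiative (RIR_max) scheme: every possible answer of every database appears in some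
decoding set of every message. -/
def IRScheme.IsRIR {K N : ℕ} {Mn : Fin N → ℕ} {Lw Lx : ℝ} (C : IRScheme K N Mn Lw Lx) : Prop :=
  ∀ (n : Fin N) (m : Fin (Mn n)) (k : Fin K), ∃ q ∈ C.Q k, q n = m

/-- A perfectly private (PIR_max) scheme: for each message there is a distribution on its
decoding sets such that the marginal distribution of the query to each database does not
depend on the message. -/
def IRScheme.IsPIR {K N : ℕ} {Mn : Fin N → ℕ} {Lw Lx : ℝ} (C : IRScheme K N Mn Lw Lx) : Prop :=
  ∃ μ : Fin K → ((n : Fin N) → Fin (Mn n)) → ℝ,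
    (∀ k q, 0 ≤ μ k q) ∧ (∀ k, ∑ q ∈ C.Q k, μ k q = 1) ∧
    (∀ (k k' : Fin K) (n : Fin N) (m : Fin (Mn n)),
      ∑ q ∈ (C.Q k).filter (fun q => q n = m), μ k q =
        ∑ q ∈ (C.Q k').filter (fun q => q n = m), μ k' q)

/-- `C_K(N) = (1 + 1/N + ⋯ + 1/N^{K-1})⁻¹`, the capacity of PIR. -/
def CK (N K : ℕ) : ℝ := (∑ j ∈ Finset.range K, (1 / (N : ℝ)) ^ j)⁻¹

namespace FinProbSpace

variable (P : FinProbSpace)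

-- ### toolkit

def phi (x : ℝ) : ℝ := -(x * Real.logb 2 x)

lemma phi_zero : phi 0 = 0 := by simp [phi]

lemma phi_one : phi 1 = 0 := by simp [phi]

lemma phi_nonneg {x : ℝ} (h0 : 0 ≤ x) (h1 : x ≤ 1) : 0 ≤ phi x := by
  have h : Real.logb 2 x ≤ 0 := Real.logb_nonpos (by norm_num) h0 h1
  have := mul_nonpos_of_nonneg_of_nonpos h0 h
  simp only [phi]; linarith

variable {P}

lemma prob_nonneg {α : Type} [DecidableEq α] (X : P.Ω → α) (a : α) : 0 ≤ P.prob X a := by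
  apply Finset.sum_nonneg
  intro ω _
  split <;> simp [P.nonneg]

lemma sum_prob {α : Type} [Fintype α] [DecidableEq α] (X : P.Ω → α) :
    ∑ a, P.prob X a = 1 := by
  unfold prob
  rw [Finset.sum_comm]
  rw [← P.sum_one]
  apply Finset.sum_congr rfl
  intro ω _
  rw [Finset.sum_ite_eq Finset.univ (X ω) (fun _ => P.p ω)]
  simp

lemma prob_le_one {α : Type} [Fintype α] [DecidableEq α] (X : P.Ω → α) (a : α) :
    P.prob X a ≤ 1 := by
  rw [← sum_prob X]
  exact Finset.single_le_sum (fun b _ => prob_nonneg X b) (Finset.mem_univ a)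

lemma H_eq_sum_phi {α : Type} [Fintype α] [DecidableEq α] (X : P.Ω → α) :
    P.H X = ∑ a, phi (P.prob X a) := rfl

lemma H_nonneg {α : Type} [Fintype α] [DecidableEq α] (X : P.Ω → α) : 0 ≤ P.H X := by
  rw [H_eq_sum_phi]
  exact Finset.sum_nonneg fun a _ => phi_nonneg (prob_nonneg X a) (prob_le_one X a)

lemma prob_comp {α β : Type} [Fintype α] [DecidableEq α] [DecidableEq β]
    (f : α → β) (X : P.Ω → α) (b : β) :
    P.prob (fun ω => f (X ω)) b = ∑ a, if f a = b then P.prob X a else 0 := by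
  unfold prob
  have step1 : ∀ a : α, (if f a = b then (∑ ω, if X ω = a then P.p ω else 0) else 0)
      = ∑ ω, (if X ω = a then (if f a = b then P.p ω else 0) else 0) := by
    intro a
    by_cases h : f a = b
    · simp [h]
    · simp [h]
  rw [Finset.sum_congr rfl (fun a _ => step1 a), Finset.sum_comm]
  apply Finset.sum_congr rfl
  intro ω _
  rw [Finset.sum_ite_eq Finset.univ (X ω)]
  simp

lemma phi_sum_le {ι : Type} (s : Finset ι) (g : ι → ℝ) (hg : ∀ i ∈ s, 0 ≤ g i) :
    phi (∑ i ∈ s, g i) ≤ ∑ i ∈ s, phi (g i) := by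
  have hS : 0 ≤ ∑ i ∈ s, g i := Finset.sum_nonneg hg
  rcases eq_or_lt_of_le hS with h | h
  · rw [← h, phi_zero]
    apply Finset.sum_nonneg
    intro i hi
    rw [(Finset.sum_eq_zero_iff_of_nonneg hg).1 h.symm i hi, phi_zero]
  · have expand : phi (∑ i ∈ s, g i)
        = ∑ i ∈ s, -(g i * Real.logb 2 (∑ j ∈ s, g j)) := by
      unfold phi
      rw [Finset.sum_mul, ← Finset.sum_neg_distrib]
    rw [expand]
    apply Finset.sum_le_sum
    intro i hi
    rcases eq_or_lt_of_le (hg i hi) with h0 | h0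
    · rw [← h0]; simp [phi]
    · have hle : g i ≤ ∑ j ∈ s, g j := Finset.single_le_sum hg hi
      have : Real.logb 2 (g i) ≤ Real.logb 2 (∑ j ∈ s, g j) :=
        (Real.logb_le_logb (by norm_num) h0 h).2 hle
      unfold phi
      nlinarith [hg i hi]

lemma H_comp_le {α β : Type} [Fintype α] [DecidableEq α] [Fintype β] [DecidableEq β]
    (f : α → β) (X : P.Ω → α) :
    P.H (fun ω => f (X ω)) ≤ P.H X := by
  rw [H_eq_sum_phi, H_eq_sum_phi]
  calc ∑ b, phi (P.prob (fun ω => f (X ω)) b)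
      = ∑ b, phi (∑ a, if f a = b then P.prob X a else 0) := by
        apply Finset.sum_congr rfl; intro b _; rw [prob_comp]
    _ ≤ ∑ b, ∑ a, (if f a = b then phi (P.prob X a) else 0) := by
        apply Finset.sum_le_sum
        intro b _
        refine le_trans (phi_sum_le _ _ ?_) (le_of_eq ?_)
        · intro a _; split <;> simp [prob_nonneg]
        · apply Finset.sum_congr rfl; intro a _
          split <;> simp [phi_zero]
    _ = ∑ a, ∑ b, (if f a = b then phi (P.prob X a) else 0) := Finset.sum_comm
    _ = ∑ a, phi (P.prob X a) := by
        apply Finset.sum_congr rfl; intro a _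
        rw [Finset.sum_ite_eq Finset.univ (f a)]
        simp

lemma H_le_of_comp {α β : Type} [Fintype α] [DecidableEq α] [Fintype β] [DecidableEq β]
    {X : P.Ω → α} {Y : P.Ω → β} (f : α → β) (h : ∀ ω, Y ω = f (X ω)) :
    P.H Y ≤ P.H X := by
  have : Y = fun ω => f (X ω) := funext h
  rw [this]; exact H_comp_le f X

lemma H_eq_of_comp₂ {α β : Type} [Fintype α] [DecidableEq α] [Fintype β] [DecidableEq β]
    {X : P.Ω → α} {Y : P.Ω → β} (f : α → β) (g : β → α)
    (hf : ∀ ω, Y ω = f (X ω)) (hg : ∀ ω, X ω = g (Y ω)) :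
    P.H Y = P.H X :=
  le_antisymm (H_le_of_comp f hf) (H_le_of_comp g hg)

lemma H_const {α : Type} [Fintype α] [DecidableEq α] (a₀ : α) :
    P.H (fun _ => a₀) = 0 := by
  have hp : ∀ a, P.prob (fun _ : P.Ω => a₀) a = if a₀ = a then 1 else 0 := by
    intro a
    unfold prob
    by_cases h : a₀ = a <;> simp [h, P.sum_one]
  rw [H_eq_sum_phi]
  rw [Finset.sum_congr rfl (fun a _ => by rw [hp a])]
  have : ∀ a : α, phi (if a₀ = a then (1:ℝ) else 0) = 0 := by
    intro a; split <;> simp [phi_one, phi_zero]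
  rw [Finset.sum_congr rfl (fun a _ => this a)]
  simp

end FinProbSpace

namespace FinProbSpace
section Submod

variable {P : FinProbSpace}
variable {α β γ : Type} [Fintype α] [DecidableEq α] [Fintype β] [DecidableEq β]
  [Fintype γ] [DecidableEq γ]

lemma H_submod (X : P.Ω → α) (Y : P.Ω → β) (Z : P.Ω → γ) :
    P.H (fun ω => (X ω, (Y ω, Z ω))) + P.H Y
      ≤ P.H (fun ω => (X ω, Y ω)) + P.H (fun ω => (Y ω, Z ω)) := by
  classical
  set r : α × β × γ → ℝ := P.prob (fun ω => (X ω, (Y ω, Z ω))) with hr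
  set s2 : α × β → ℝ := P.prob (fun ω => (X ω, Y ω)) with hs2
  set t2 : β × γ → ℝ := P.prob (fun ω => (Y ω, Z ω)) with ht2
  set q : β → ℝ := P.prob Y with hq
  have hr0 : ∀ v, 0 ≤ r v := fun v => prob_nonneg _ _
  have hs0 : ∀ u, 0 ≤ s2 u := fun u => prob_nonneg _ _
  have ht0 : ∀ u, 0 ≤ t2 u := fun u => prob_nonneg _ _
  have hq0 : ∀ b, 0 ≤ q b := fun b => prob_nonneg _ _
  have m1 : ∀ a b, ∑ c, r (a,(b,c)) = s2 (a,b) := by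
    intro a b
    show ∑ c, ∑ ω, _ = ∑ ω, _
    rw [Finset.sum_comm]
    apply Finset.sum_congr rfl
    intro ω _
    by_cases hx : X ω = a <;> by_cases hy : Y ω = b <;>
      simp [Prod.ext_iff, hx, hy, Finset.sum_ite_eq]
  have m2 : ∀ b c, ∑ a, r (a,(b,c)) = t2 (b,c) := by
    intro b c
    show ∑ a, ∑ ω, _ = ∑ ω, _
    rw [Finset.sum_comm]
    apply Finset.sum_congr rfl
    intro ω _
    by_cases hy : Y ω = b <;> by_cases hz : Z ω = c <;>
      simp [Prod.ext_iff, hy, hz, Finset.sum_ite_eq]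
  have m4 : ∀ b, ∑ c, t2 (b,c) = q b := by
    intro b
    show ∑ c, ∑ ω, _ = ∑ ω, _
    rw [Finset.sum_comm]
    apply Finset.sum_congr rfl
    intro ω _
    by_cases hy : Y ω = b <;> simp [Prod.ext_iff, hy, Finset.sum_ite_eq]
  have m5 : ∀ b, ∑ a, s2 (a,b) = q b := by
    intro b
    show ∑ a, ∑ ω, _ = ∑ ω, _
    rw [Finset.sum_comm]
    apply Finset.sum_congr rfl
    intro ω _
    by_cases hy : Y ω = b <;> simp [Prod.ext_iff, hy, Finset.sum_ite_eq]
  have hrs : ∀ v : α × β × γ, r v ≤ s2 (v.1, v.2.1) := by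
    rintro ⟨a, b, c⟩
    rw [← m1 a b]
    exact Finset.single_le_sum (f := fun c' => r (a,(b,c'))) (fun c' _ => hr0 _)
      (Finset.mem_univ c)
  have hrt : ∀ v : α × β × γ, r v ≤ t2 v.2 := by
    rintro ⟨a, b, c⟩
    rw [show ((a,(b,c)) : α × β × γ).2 = (b,c) from rfl, ← m2 b c]
    exact Finset.single_le_sum (f := fun a' => r (a',(b,c))) (fun a' _ => hr0 _)
      (Finset.mem_univ a)
  have htq : ∀ u : β × γ, t2 u ≤ q u.1 := by
    rintro ⟨b, c⟩
    rw [show ((b,c) : β × γ).1 = b from rfl, ← m4 b]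
    exact Finset.single_le_sum (f := fun c' => t2 (b,c')) (fun c' _ => ht0 _)
      (Finset.mem_univ c)
  have eT : P.H (fun ω => (X ω, (Y ω, Z ω))) = ∑ v : α × β × γ, phi (r v) :=
    H_eq_sum_phi _
  have eXY : P.H (fun ω => (X ω, Y ω))
      = ∑ v : α × β × γ, -(r v * Real.logb 2 (s2 (v.1, v.2.1))) := by
    rw [H_eq_sum_phi]
    rw [Fintype.sum_prod_type (f := fun u : α × β => phi (s2 u))]
    rw [Fintype.sum_prod_type (f := fun v : α × β × γ => -(r v * Real.logb 2 (s2 (v.1, v.2.1))))]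
    apply Finset.sum_congr rfl
    intro a _
    rw [Fintype.sum_prod_type (f := fun u : β × γ => -(r (a, u) * Real.logb 2 (s2 (a, u.1))))]
    apply Finset.sum_congr rfl
    intro b _
    show phi (s2 (a, b)) = ∑ c, -(r (a,(b,c)) * Real.logb 2 (s2 (a,b)))
    rw [Finset.sum_neg_distrib, ← Finset.sum_mul, m1]
    rfl
  have eYZ : P.H (fun ω => (Y ω, Z ω))
      = ∑ v : α × β × γ, -(r v * Real.logb 2 (t2 v.2)) := by
    rw [H_eq_sum_phi]
    rw [Fintype.sum_prod_type (f := fun v : α × β × γ => -(r v * Real.logb 2 (t2 v.2)))]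
    rw [Finset.sum_comm]
    apply Finset.sum_congr rfl
    intro u _
    show phi (t2 u) = ∑ a, -(r (a, u) * Real.logb 2 (t2 u))
    rw [Finset.sum_neg_distrib, ← Finset.sum_mul]
    obtain ⟨b, c⟩ := u
    rw [m2]
    rfl
  have eY : P.H Y = ∑ v : α × β × γ, -(r v * Real.logb 2 (q v.2.1)) := by
    rw [H_eq_sum_phi]
    rw [Fintype.sum_prod_type (f := fun v : α × β × γ => -(r v * Real.logb 2 (q v.2.1)))]
    rw [Finset.sum_comm]
    rw [Fintype.sum_prod_type (f := fun u : β × γ => ∑ a, -(r (a, u) * Real.logb 2 (q u.1)))]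
    apply Finset.sum_congr rfl
    intro b _
    show phi (q b) = ∑ c, ∑ a, -(r (a,(b,c)) * Real.logb 2 (q b))
    have inner : ∀ c, ∑ a, -(r (a,(b,c)) * Real.logb 2 (q b))
        = -(t2 (b,c) * Real.logb 2 (q b)) := by
      intro c
      rw [Finset.sum_neg_distrib, ← Finset.sum_mul, m2]
    rw [Finset.sum_congr rfl (fun c _ => inner c), Finset.sum_neg_distrib, ← Finset.sum_mul, m4]
    rfl
  have hlog2 : (0:ℝ) < Real.log 2 := Real.log_pos (by norm_num)
  set D : α × β × γ → ℝ := fun v =>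
    r v * (Real.logb 2 (r v) + Real.logb 2 (q v.2.1)
      - Real.logb 2 (s2 (v.1, v.2.1)) - Real.logb 2 (t2 v.2)) with hD
  set U : α × β × γ → ℝ := fun v =>
    if 0 < r v then s2 (v.1, v.2.1) * t2 v.2 / q v.2.1 else 0 with hU
  have key : ∀ v, (r v - U v) / Real.log 2 ≤ D v := by
    intro v
    by_cases hv : 0 < r v
    · have hsv : 0 < s2 (v.1, v.2.1) := lt_of_lt_of_le hv (hrs v)
      have htv : 0 < t2 v.2 := lt_of_lt_of_le hv (hrt v)
      have hqv : 0 < q v.2.1 := lt_of_lt_of_le htv (htq v.2)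
      have hUv : U v = s2 (v.1, v.2.1) * t2 v.2 / q v.2.1 := by
        simp only [hU]; rw [if_pos hv]
      have hx : 0 < s2 (v.1, v.2.1) * t2 v.2 / (r v * q v.2.1) := by positivity
      have hlog := Real.log_le_sub_one_of_pos hx
      have hsplit : Real.log (s2 (v.1, v.2.1) * t2 v.2 / (r v * q v.2.1))
          = Real.log (s2 (v.1, v.2.1)) + Real.log (t2 v.2)
            - Real.log (r v) - Real.log (q v.2.1) := by
        rw [Real.log_div (by positivity) (by positivity), Real.log_mul hsv.ne' htv.ne',
          Real.log_mul hv.ne' hqv.ne']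
        ring
      have h1 : r v * Real.log (s2 (v.1, v.2.1) * t2 v.2 / (r v * q v.2.1))
          ≤ r v * (s2 (v.1, v.2.1) * t2 v.2 / (r v * q v.2.1) - 1) :=
        mul_le_mul_of_nonneg_left hlog hv.le
      have h2 : r v * (s2 (v.1, v.2.1) * t2 v.2 / (r v * q v.2.1) - 1)
          = s2 (v.1, v.2.1) * t2 v.2 / q v.2.1 - r v := by
        field_simp
        try ring
      have hDv : D v = r v * (Real.logb 2 (r v) + Real.logb 2 (q v.2.1)
          - Real.logb 2 (s2 (v.1, v.2.1)) - Real.logb 2 (t2 v.2)) := by simp only [hD]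
      rw [hDv, hUv]
      simp only [Real.logb]
      rw [div_le_iff₀ hlog2]
      have h3 : r v * (Real.log (r v) / Real.log 2 + Real.log (q v.2.1) / Real.log 2
            - Real.log (s2 (v.1, v.2.1)) / Real.log 2 - Real.log (t2 v.2) / Real.log 2)
            * Real.log 2
          = r v * (Real.log (r v) + Real.log (q v.2.1)
            - Real.log (s2 (v.1, v.2.1)) - Real.log (t2 v.2)) := by
        field_simp
        try ring
      rw [h3]
      rw [hsplit] at h1
      linarith
    · have hv0 : r v = 0 := le_antisymm (not_lt.1 hv) (hr0 v)
      have hUv : U v = 0 := by simp only [hU]; rw [if_neg hv]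
      have hDv : D v = r v * (Real.logb 2 (r v) + Real.logb 2 (q v.2.1)
          - Real.logb 2 (s2 (v.1, v.2.1)) - Real.logb 2 (t2 v.2)) := by simp only [hD]
      rw [hDv, hUv, hv0]
      simp
  have hsumr : ∑ v : α × β × γ, r v = 1 := sum_prob _
  have hUle : ∀ v : α × β × γ, U v
      ≤ (if 0 < q v.2.1 then s2 (v.1, v.2.1) * t2 v.2 / q v.2.1 else 0) := by
    intro v
    by_cases hv : 0 < r v
    · have htv : 0 < t2 v.2 := lt_of_lt_of_le hv (hrt v)
      have hqv : 0 < q v.2.1 := lt_of_lt_of_le htv (htq v.2)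
      simp only [hU]
      rw [if_pos hv, if_pos hqv]
    · simp only [hU]
      rw [if_neg hv]
      split
      · next hqv => exact div_nonneg (mul_nonneg (hs0 _) (ht0 _)) (hq0 _)
      · exact le_refl 0
  have hsumq : ∑ v : α × β × γ,
      (if 0 < q v.2.1 then s2 (v.1, v.2.1) * t2 v.2 / q v.2.1 else 0) ≤ 1 := by
    rw [Fintype.sum_prod_type
      (f := fun v : α × β × γ => if 0 < q v.2.1 then s2 (v.1, v.2.1) * t2 v.2 / q v.2.1 else 0)]
    rw [Finset.sum_comm]
    rw [Fintype.sum_prod_type (f := fun u : β × γ =>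
      ∑ a : α, if 0 < q u.1 then s2 (a, u.1) * t2 u / q u.1 else 0)]
    have perb : ∀ b, (∑ c, ∑ a, if 0 < q b then s2 (a, b) * t2 (b, c) / q b else 0) ≤ q b := by
      intro b
      by_cases hqb : 0 < q b
      · have inner : ∀ c, (∑ a, if 0 < q b then s2 (a, b) * t2 (b, c) / q b else 0)
            = t2 (b, c) := by
          intro c
          rw [Finset.sum_congr rfl (fun a _ => if_pos hqb)]
          have e : ∀ a : α, s2 (a, b) * t2 (b, c) / q b = s2 (a, b) * (t2 (b, c) / q b) := by
            intro a
            rw [mul_div_assoc]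
          rw [Finset.sum_congr rfl (fun a _ => e a), ← Finset.sum_mul, m5]
          field_simp
        rw [Finset.sum_congr rfl (fun c _ => inner c), m4]
      · have inner : ∀ c, (∑ a, if 0 < q b then s2 (a, b) * t2 (b, c) / q b else 0) = 0 := by
          intro c
          rw [Finset.sum_congr rfl (fun a _ => if_neg hqb)]
          simp
        rw [Finset.sum_congr rfl (fun c _ => inner c)]
        simp [hq0 b]
    refine le_trans (Finset.sum_le_sum (fun b (_ : b ∈ Finset.univ) => ?_))
      (le_of_eq (sum_prob Y))
    exact perb b
  have hsumU : ∑ v : α × β × γ, U v ≤ 1 :=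
    le_trans (Finset.sum_le_sum (fun v _ => hUle v)) hsumq
  have e1 : ∑ v : α × β × γ, (r v - U v) / Real.log 2
      = (1 - ∑ v : α × β × γ, U v) / Real.log 2 := by
    rw [← Finset.sum_div, Finset.sum_sub_distrib, hsumr]
  have big : 0 ≤ ∑ v : α × β × γ, D v := by
    have h4 := Finset.sum_le_sum (fun v (_ : v ∈ (Finset.univ : Finset (α × β × γ))) => key v)
    have e2 : 0 ≤ (1 - ∑ v : α × β × γ, U v) / Real.log 2 :=
      div_nonneg (by linarith) hlog2.le
    calc (0:ℝ) ≤ (1 - ∑ v : α × β × γ, U v) / Real.log 2 := e2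
      _ = ∑ v : α × β × γ, (r v - U v) / Real.log 2 := e1.symm
      _ ≤ ∑ v : α × β × γ, D v := h4
  have expand : ∑ v : α × β × γ, D v
      = ((∑ v : α × β × γ, -(r v * Real.logb 2 (s2 (v.1, v.2.1))))
        + (∑ v : α × β × γ, -(r v * Real.logb 2 (t2 v.2))))
        - ((∑ v : α × β × γ, phi (r v))
        + (∑ v : α × β × γ, -(r v * Real.logb 2 (q v.2.1)))) := by
    rw [← Finset.sum_add_distrib, ← Finset.sum_add_distrib, ← Finset.sum_sub_distrib]
    apply Finset.sum_congr rfl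
    intro v _
    have hDv : D v = r v * (Real.logb 2 (r v) + Real.logb 2 (q v.2.1)
        - Real.logb 2 (s2 (v.1, v.2.1)) - Real.logb 2 (t2 v.2)) := by simp only [hD]
    rw [hDv]
    simp only [phi]
    ring
  rw [eT, eXY, eYZ, eY]
  linarith [big, expand]

end Submod
end FinProbSpace

namespace FinProbSpace
section Derived

variable {P : FinProbSpace}
variable {α β γ : Type} [Fintype α] [DecidableEq α] [Fintype β] [DecidableEq β]
  [Fintype γ] [DecidableEq γ]

lemma H_snd_le (X : P.Ω → α) (Y : P.Ω → β) : P.H Y ≤ P.H (fun ω => (X ω, Y ω)) :=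
  H_le_of_comp (f := Prod.snd) (fun _ => rfl)

lemma condH_nonneg (X : P.Ω → α) (Y : P.Ω → β) : 0 ≤ P.condH X Y :=
  sub_nonneg.2 (H_snd_le X Y)

lemma H_pair_congr_left {X : P.Ω → α} {X' : P.Ω → γ} (f : α → γ) (g : γ → α)
    (hf : ∀ ω, X' ω = f (X ω)) (hg : ∀ ω, X ω = g (X' ω)) (Y : P.Ω → β) :
    P.H (fun ω => (X' ω, Y ω)) = P.H (fun ω => (X ω, Y ω)) :=
  H_eq_of_comp₂ (Prod.map f id) (Prod.map g id)
    (fun ω => by simp [Prod.map, hf ω]) (fun ω => by simp [Prod.map, ← hg ω])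

lemma H_pair_congr_right {Y : P.Ω → β} {Y' : P.Ω → γ} (f : β → γ) (g : γ → β)
    (hf : ∀ ω, Y' ω = f (Y ω)) (hg : ∀ ω, Y ω = g (Y' ω)) (X : P.Ω → α) :
    P.H (fun ω => (X ω, Y' ω)) = P.H (fun ω => (X ω, Y ω)) :=
  H_eq_of_comp₂ (Prod.map id f) (Prod.map id g)
    (fun ω => by simp [Prod.map, hf ω]) (fun ω => by simp [Prod.map, ← hg ω])

lemma condH_congr_right {Y : P.Ω → β} {Y' : P.Ω → γ} (f : β → γ) (g : γ → β)
    (hf : ∀ ω, Y' ω = f (Y ω)) (hg : ∀ ω, Y ω = g (Y' ω)) (X : P.Ω → α) :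
    P.condH X Y' = P.condH X Y := by
  unfold condH
  rw [H_pair_congr_right f g hf hg X, H_eq_of_comp₂ f g hf hg]

lemma condH_congr_left {X : P.Ω → α} {X' : P.Ω → γ} (f : α → γ) (g : γ → α)
    (hf : ∀ ω, X' ω = f (X ω)) (hg : ∀ ω, X ω = g (X' ω)) (Y : P.Ω → β) :
    P.condH X' Y = P.condH X Y := by
  unfold condH
  rw [H_pair_congr_left f g hf hg Y]

lemma condH_zero_of_comp {X : P.Ω → α} {Y : P.Ω → β} (f : β → α)
    (h : ∀ ω, X ω = f (Y ω)) : P.condH X Y = 0 := by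
  simp only [condH]
  have e : P.H (fun ω => (X ω, Y ω)) = P.H Y := by
    refine H_eq_of_comp₂ (X := Y) (Y := fun ω => (X ω, Y ω))
      (fun b => (f b, b)) Prod.snd (fun ω => ?_) (fun _ => rfl)
    show (X ω, Y ω) = (f (Y ω), Y ω)
    rw [h ω]
  rw [e]
  ring

lemma H_pair_assoc (X : P.Ω → α) (Y : P.Ω → β) (Z : P.Ω → γ) :
    P.H (fun ω => ((X ω, Y ω), Z ω)) = P.H (fun ω => (X ω, (Y ω, Z ω))) :=
  H_eq_of_comp₂ (fun u : α × β × γ => ((u.1, u.2.1), u.2.2))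
    (fun u : (α × β) × γ => (u.1.1, (u.1.2, u.2))) (fun _ => rfl) (fun _ => rfl)

lemma condH_chain (A : P.Ω → α) (B : P.Ω → β) (Z : P.Ω → γ) :
    P.condH (fun ω => (A ω, B ω)) Z
      = P.condH A (fun ω => (B ω, Z ω)) + P.condH B Z := by
  simp only [condH]
  have h := H_pair_assoc A B Z
  linarith [h]

lemma condH_reduce (X : P.Ω → α) (Y : P.Ω → β) (Z : P.Ω → γ) :
    P.condH X (fun ω => (Y ω, Z ω)) ≤ P.condH X Y := by
  simp only [condH]
  linarith [H_submod X Y Z]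

lemma condH_le_of_comp {A : P.Ω → α} {B : P.Ω → β} (f : β → α)
    (h : ∀ ω, A ω = f (B ω)) (Z : P.Ω → γ) : P.condH A Z ≤ P.condH B Z := by
  simp only [condH]
  have : P.H (fun ω => (A ω, Z ω)) ≤ P.H (fun ω => (B ω, Z ω)) :=
    H_le_of_comp (f := Prod.map f id) (fun ω => by simp [Prod.map, h ω])
  linarith

lemma condH_pair_le (A : P.Ω → α) (B : P.Ω → β) (Z : P.Ω → γ) :
    P.condH (fun ω => (A ω, B ω)) Z ≤ P.condH A Z + P.condH B Z := by
  have hc := condH_chain A B Z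
  have hswap : P.condH A (fun ω => (B ω, Z ω)) = P.condH A (fun ω => (Z ω, B ω)) :=
    condH_congr_right (Y := fun ω => (Z ω, B ω)) (Y' := fun ω => (B ω, Z ω))
      (f := fun u => (u.2, u.1)) (g := fun u => (u.2, u.1)) (fun _ => rfl) (fun _ => rfl) A
  have h3 : P.condH A (fun ω => (Z ω, B ω)) ≤ P.condH A Z := condH_reduce A Z B
  linarith

lemma phi_mul {p q : ℝ} (hp : 0 ≤ p) (hq : 0 ≤ q) :
    phi (p * q) = q * phi p + p * phi q := by
  rcases eq_or_lt_of_le hp with h | h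
  · simp [← h, phi_zero, phi]
  · rcases eq_or_lt_of_le hq with h' | h'
    · simp [← h', phi_zero, phi]
    · unfold phi
      rw [Real.logb, Real.logb, Real.logb, Real.log_mul h.ne' h'.ne']
      field_simp
      ring

lemma H_add_of_indep {A : P.Ω → α} {B : P.Ω → β}
    (h : ∀ a b, P.prob (fun ω => (A ω, B ω)) (a, b) = P.prob A a * P.prob B b) :
    P.H (fun ω => (A ω, B ω)) = P.H A + P.H B := by
  rw [H_eq_sum_phi,
    Fintype.sum_prod_type (f := fun u : α × β => phi (P.prob (fun ω => (A ω, B ω)) u))]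
  have inner : ∀ a, ∑ b, phi (P.prob (fun ω => (A ω, B ω)) (a, b))
      = phi (P.prob A a) + P.prob A a * P.H B := by
    intro a
    have e : ∀ b, phi (P.prob (fun ω => (A ω, B ω)) (a, b))
        = P.prob B b * phi (P.prob A a) + P.prob A a * phi (P.prob B b) := by
      intro b
      rw [h a b, phi_mul (prob_nonneg A a) (prob_nonneg B b)]
    rw [Finset.sum_congr rfl (fun b _ => e b), Finset.sum_add_distrib,
      ← Finset.sum_mul, ← Finset.mul_sum, sum_prob, one_mul, H_eq_sum_phi]
  rw [Finset.sum_congr rfl (fun a _ => inner a), Finset.sum_add_distrib,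
    ← Finset.sum_mul, ← H_eq_sum_phi, sum_prob, one_mul]

end Derived
end FinProbSpace

namespace FinProbSpace
section Indep

variable {P : FinProbSpace}

lemma condH_unit {α β : Type} [Fintype α] [DecidableEq α] [Fintype β] [DecidableEq β]
    (X : P.Ω → α) (a₀ : β) : P.condH X (fun _ => a₀) = P.H X := by
  simp only [condH]
  rw [H_const]
  rw [H_eq_of_comp₂ (X := X) (Y := fun ω => (X ω, a₀)) (f := fun x => (x, a₀))
    (g := Prod.fst) (fun _ => rfl) (fun _ => rfl)]
  ring

lemma sum_if_agree_prod {ι V : Type} [Fintype ι] [DecidableEq ι] [Fintype V] [DecidableEq V]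
    (q : ι → V → ℝ) (hq : ∀ i, ∑ x, q i x = 1) (J : Finset ι) (a : ι → V) :
    (∑ h : ι → V, if ∀ j ∈ J, h j = a j then ∏ i, q i (h i) else 0)
      = ∏ j ∈ J, q j (a j) := by
  classical
  have key : ∀ h : ι → V, (if ∀ j ∈ J, h j = a j then ∏ i, q i (h i) else 0)
      = ∏ i, (if i ∈ J then (if h i = a i then q i (h i) else 0) else q i (h i)) := by
    intro h
    by_cases hc : ∀ j ∈ J, h j = a j
    · rw [if_pos hc]
      apply Finset.prod_congr rfl
      intro i _
      by_cases hiJ : i ∈ J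
      · rw [if_pos hiJ, if_pos (hc i hiJ)]
      · rw [if_neg hiJ]
    · rw [if_neg hc]
      push_neg at hc
      obtain ⟨j, hjJ, hja⟩ := hc
      refine (Finset.prod_eq_zero (Finset.mem_univ j) ?_).symm
      rw [if_pos hjJ, if_neg hja]
  rw [Finset.sum_congr rfl (fun h _ => key h)]
  rw [← Fintype.piFinset_univ, ← Finset.prod_univ_sum (t := fun _ => (Finset.univ : Finset V))
    (f := fun i x => if i ∈ J then (if x = a i then q i x else 0) else q i x)]
  have inner : ∀ i, (∑ x, if i ∈ J then (if x = a i then q i x else 0) else q i x)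
      = if i ∈ J then q i (a i) else 1 := by
    intro i
    by_cases hiJ : i ∈ J
    · simp only [hiJ, if_true]
      rw [Finset.sum_ite_eq' Finset.univ (a i) (fun x => q i x)]
      simp
    · simp only [hiJ, if_false]
      exact hq i
  rw [Finset.prod_congr rfl (fun i _ => inner i), Finset.prod_ite_mem, Finset.univ_inter]

lemma condH_indep {ι V : Type} [Fintype ι] [DecidableEq ι] [Fintype V] [DecidableEq V]
    {W : ι → P.Ω → V} (hW : P.iIndep W) (k : ι) (J : Finset ι) (hk : k ∉ J) :
    P.condH (W k) (P.tuple fun j : {x // x ∈ J} => W j.1) = P.H (W k) := by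
  classical
  set WJ : P.Ω → ({x // x ∈ J} → V) := P.tuple fun j : {x // x ∈ J} => W j.1 with hWJ
  have hfact : ∀ (v : V) (a : {x // x ∈ J} → V),
      P.prob (fun ω => (W k ω, WJ ω)) (v, a) = P.prob (W k) v * P.prob WJ a := by
    intro v a
    set a' : ι → V := fun i => if hi : i ∈ J then a ⟨i, hi⟩ else v with ha'
    have ha'k : a' k = v := by rw [ha']; exact dif_neg hk
    have ha'J : ∀ (j : ι) (hj : j ∈ J), a' j = a ⟨j, hj⟩ := by
      intro j hj; rw [ha']; exact dif_pos hj
    have hpair : P.prob (fun ω => (W k ω, WJ ω)) (v, a)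
        = ∏ j ∈ insert k J, P.prob (W j) (a' j) := by
      have e1 : P.prob (fun ω => (W k ω, WJ ω)) (v, a)
          = ∑ h : ι → V, if (h k, fun j : {x // x ∈ J} => h j.1) = ((v, a) : V × _)
              then P.prob (P.tuple W) h else 0 :=
        prob_comp (f := fun h : ι → V => (h k, fun j : {x // x ∈ J} => h j.1))
          (P.tuple W) (v, a)
      rw [e1]
      have e2 : ∀ h : ι → V,
          (((h k, fun j : {x // x ∈ J} => h j.1) = ((v, a) : V × _))
            ↔ (∀ j ∈ insert k J, h j = a' j)) := by
        intro h
        rw [Prod.ext_iff]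
        constructor
        · rintro ⟨h1, h2⟩ j hj
          rcases Finset.mem_insert.1 hj with rfl | hjJ
          · rw [ha'k]; exact h1
          · rw [ha'J j hjJ]; exact congrFun h2 ⟨j, hjJ⟩
        · intro hall
          constructor
          · rw [← ha'k]; exact hall k (Finset.mem_insert_self k J)
          · funext j
            show h j.1 = a j
            rw [hall j.1 (Finset.mem_insert_of_mem j.2), ha'J j.1 j.2]
      calc (∑ h : ι → V, if (h k, fun j : {x // x ∈ J} => h j.1) = ((v, a) : V × _)
              then P.prob (P.tuple W) h else 0)
          = ∑ h : ι → V, if (∀ j ∈ insert k J, h j = a' j)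
              then ∏ i, P.prob (W i) (h i) else 0 := by
            apply Finset.sum_congr rfl
            intro h _
            rw [hW h]
            exact if_congr (e2 h) rfl rfl
        _ = ∏ j ∈ insert k J, P.prob (W j) (a' j) :=
            sum_if_agree_prod _ (fun i => sum_prob _) _ _
    have htup : P.prob WJ a = ∏ j ∈ J, P.prob (W j) (a' j) := by
      have e1 : P.prob WJ a
          = ∑ h : ι → V, if (fun j : {x // x ∈ J} => h j.1) = a
              then P.prob (P.tuple W) h else 0 :=
        prob_comp (f := fun h : ι → V => (fun j : {x // x ∈ J} => h j.1)) (P.tuple W) a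
      rw [e1]
      have e2 : ∀ h : ι → V,
          (((fun j : {x // x ∈ J} => h j.1) = a) ↔ (∀ j ∈ J, h j = a' j)) := by
        intro h
        constructor
        · intro h2 j hj
          rw [ha'J j hj]; exact congrFun h2 ⟨j, hj⟩
        · intro hall
          funext j
          show h j.1 = a j
          rw [hall j.1 j.2, ha'J j.1 j.2]
      calc (∑ h : ι → V, if (fun j : {x // x ∈ J} => h j.1) = a
              then P.prob (P.tuple W) h else 0)
          = ∑ h : ι → V, if (∀ j ∈ J, h j = a' j)
              then ∏ i, P.prob (W i) (h i) else 0 := by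
            apply Finset.sum_congr rfl
            intro h _
            rw [hW h]
            exact if_congr (e2 h) rfl rfl
        _ = ∏ j ∈ J, P.prob (W j) (a' j) :=
            sum_if_agree_prod _ (fun i => sum_prob _) _ _
    rw [hpair, htup, Finset.prod_insert hk, ha'k]
  have hadd := H_add_of_indep (A := W k) (B := WJ) hfact
  simp only [condH]
  rw [hadd]
  ring

end Indep
end FinProbSpace

section LDCLemmas

open FinProbSpace

variable {K N M : ℕ} {Lw Lx : ℝ}

/-- The tuple of source symbols indexed by `J`. -/
def LDC.WJ (C : LDC K N M Lw Lx) (J : Finset (Fin K)) : C.P.Ω → ({x // x ∈ J} → C.V) :=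
  C.P.tuple fun j : {x // x ∈ J} => C.W j.1

/-- The tuple of coded symbols indexed by `s`. -/
def LDC.XT (C : LDC K N M Lw Lx) (s : Finset (Fin M)) : C.P.Ω → ({x // x ∈ s} → C.V') :=
  C.P.tuple fun i : {x // x ∈ s} => C.X i.1

lemma LDC.condH_W_WJ (C : LDC K N M Lw Lx) {k : Fin K} {J : Finset (Fin K)} (hk : k ∉ J) :
    C.P.condH (C.W k) (C.WJ J) = Lw := by
  have h := FinProbSpace.condH_indep C.indep k J hk
  rw [C.HW k] at h
  exact h

lemma LDC.condH_XT_le_sum (C : LDC K N M Lw Lx) (s : Finset (Fin M))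
    {γ : Type} [Fintype γ] [DecidableEq γ] (Z : C.P.Ω → γ) :
    C.P.condH (C.XT s) Z ≤ ∑ i ∈ s, C.P.condH (C.X i) Z := by
  classical
  induction s using Finset.induction_on with
  | empty =>
    rw [Finset.sum_empty]
    have h0 : C.P.condH (C.XT ∅) Z = 0 :=
      FinProbSpace.condH_zero_of_comp
        (f := fun _ => (fun j : {x // x ∈ (∅ : Finset (Fin M))} =>
          absurd j.2 (Finset.notMem_empty j.1)))
        (fun ω => funext fun j => absurd j.2 (Finset.notMem_empty j.1))
    rw [h0]
  | @insert a s ha ih =>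
    have hcongr : C.P.condH (C.XT (insert a s)) Z
        = C.P.condH (fun ω => (C.X a ω, C.XT s ω)) Z := by
      refine FinProbSpace.condH_congr_left
        (X := fun ω => (C.X a ω, C.XT s ω)) (X' := C.XT (insert a s))
        (f := fun u => fun j : {x // x ∈ insert a s} =>
          if hj : j.1 = a then u.1 else u.2 ⟨j.1, (Finset.mem_insert.1 j.2).resolve_left hj⟩)
        (g := fun t => (t ⟨a, Finset.mem_insert_self a s⟩,
          fun j : {x // x ∈ s} => t ⟨j.1, Finset.mem_insert_of_mem j.2⟩))
        (fun ω => ?_) (fun ω => rfl) Z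
      funext j
      show C.X j.1 ω = if hj : j.1 = a then C.X a ω
        else C.XT s ω ⟨j.1, (Finset.mem_insert.1 j.2).resolve_left hj⟩
      by_cases hj : j.1 = a
      · rw [dif_pos hj, hj]
      · rw [dif_neg hj]; rfl
    rw [hcongr, Finset.sum_insert ha]
    calc C.P.condH (fun ω => (C.X a ω, C.XT s ω)) Z
        ≤ C.P.condH (C.X a) Z + C.P.condH (C.XT s) Z :=
          FinProbSpace.condH_pair_le _ _ _
      _ ≤ C.P.condH (C.X a) Z + ∑ i ∈ s, C.P.condH (C.X i) Z := by linarith [ih]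
      _ = _ := rfl

lemma LDC.condH_le_XT (C : LDC K N M Lw Lx) {s : Finset (Fin M)} {i : Fin M} (hi : i ∈ s)
    {γ : Type} [Fintype γ] [DecidableEq γ] (Z : C.P.Ω → γ) :
    C.P.condH (C.X i) Z ≤ C.P.condH (C.XT s) Z :=
  FinProbSpace.condH_le_of_comp (A := C.X i) (B := C.XT s)
    (f := fun t => t ⟨i, hi⟩) (fun _ => rfl) Z

lemma LDC.condH_pair_le_XT (C : LDC K N M Lw Lx) {s : Finset (Fin M)} {i₁ i₂ : Fin M}
    (h₁ : i₁ ∈ s) (h₂ : i₂ ∈ s)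
    {γ : Type} [Fintype γ] [DecidableEq γ] (Z : C.P.Ω → γ) :
    C.P.condH (fun ω => (C.X i₁ ω, C.X i₂ ω)) Z ≤ C.P.condH (C.XT s) Z :=
  FinProbSpace.condH_le_of_comp (A := fun ω => (C.X i₁ ω, C.X i₂ ω)) (B := C.XT s)
    (f := fun t => (t ⟨i₁, h₁⟩, t ⟨i₂, h₂⟩)) (fun _ => rfl) Z

lemma LDC.decode_ext (C : LDC K N M Lw Lx) {k : Fin K} {S : Finset (Fin M)}
    (hS : S ∈ C.decSets k) {γ : Type} [Fintype γ] [DecidableEq γ] (Z : C.P.Ω → γ) :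
    C.P.condH (C.W k) (fun ω => (C.XT S ω, Z ω)) = 0 := by
  refine le_antisymm ?_ (FinProbSpace.condH_nonneg _ _)
  calc C.P.condH (C.W k) (fun ω => (C.XT S ω, Z ω)) ≤ C.P.condH (C.W k) (C.XT S) :=
      FinProbSpace.condH_reduce _ _ _
    _ = 0 := C.decodes k S hS

lemma LDC.split (C : LDC K N M Lw Lx) {k : Fin K} {J : Finset (Fin K)} {S : Finset (Fin M)}
    (hk : k ∉ J) (hS : S ∈ C.decSets k) :
    C.P.condH (C.XT S) (C.WJ (insert k J)) = C.P.condH (C.XT S) (C.WJ J) - Lw := by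
  have hcongr : C.P.condH (C.XT S) (C.WJ (insert k J))
      = C.P.condH (C.XT S) (fun ω => (C.W k ω, C.WJ J ω)) := by
    refine (FinProbSpace.condH_congr_right
      (Y := C.WJ (insert k J)) (Y' := fun ω => (C.W k ω, C.WJ J ω))
      (f := fun t => (t ⟨k, Finset.mem_insert_self k J⟩,
        fun j : {x // x ∈ J} => t ⟨j.1, Finset.mem_insert_of_mem j.2⟩))
      (g := fun u => fun j : {x // x ∈ insert k J} =>
        if hj : j.1 = k then u.1 else u.2 ⟨j.1, (Finset.mem_insert.1 j.2).resolve_left hj⟩)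
      (fun ω => rfl) (fun ω => ?_) (C.XT S)).symm
    funext j
    show C.W j.1 ω = if hj : j.1 = k then C.W k ω
      else C.WJ J ω ⟨j.1, (Finset.mem_insert.1 j.2).resolve_left hj⟩
    by_cases hj : j.1 = k
    · rw [dif_pos hj, hj]
    · rw [dif_neg hj]; rfl
  have hc1 := FinProbSpace.condH_chain (C.XT S) (C.W k) (C.WJ J)
  have hc2 := FinProbSpace.condH_chain (C.W k) (C.XT S) (C.WJ J)
  have hswap : C.P.condH (fun ω => (C.XT S ω, C.W k ω)) (C.WJ J)
      = C.P.condH (fun ω => (C.W k ω, C.XT S ω)) (C.WJ J) :=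
    FinProbSpace.condH_congr_left
      (X := fun ω => (C.W k ω, C.XT S ω)) (X' := fun ω => (C.XT S ω, C.W k ω))
      (f := fun u => (u.2, u.1)) (g := fun u => (u.2, u.1)) (fun _ => rfl) (fun _ => rfl) _
  have hdec := LDC.decode_ext C hS (C.WJ J)
  have hind := LDC.condH_W_WJ C hk
  rw [hcongr]
  linarith

/-- The sequence `c_j = Lw ∑_{t=1}^{K-j} (1/N)^t`. -/
def uldcC (Lw : ℝ) (N K : ℕ) (j : ℕ) : ℝ :=
  Lw * ∑ t ∈ Finset.range (K - j), (1 / (N:ℝ))^(t+1)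

lemma uldcC_rec (Lw : ℝ) {N K j : ℕ} (hN : 0 < N) (hj : j < K) :
    (N:ℝ) * uldcC Lw N K j - Lw = uldcC Lw N K (j+1) := by
  have hN0 : (N:ℝ) ≠ 0 := Nat.cast_ne_zero.2 hN.ne'
  have hKj : K - j = (K - (j+1)) + 1 := by omega
  rw [uldcC, uldcC, hKj, Finset.sum_range_succ']
  have e1 : ∑ t ∈ Finset.range (K - (j+1)), (1/(N:ℝ))^(t+1+1)
      = (∑ t ∈ Finset.range (K - (j+1)), (1/(N:ℝ))^(t+1)) * (1/(N:ℝ)) := by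
    rw [Finset.sum_mul]
    apply Finset.sum_congr rfl
    intro t _
    rw [pow_succ]
  rw [e1]
  have hinv : (N:ℝ) * (1/(N:ℝ)) = 1 := by field_simp
  linear_combination (Lw * (∑ t ∈ Finset.range (K - (j+1)), (1/(N:ℝ))^(t+1) + 1)) * hinv

lemma uldcC_last (Lw : ℝ) {N K : ℕ} (hK : 1 ≤ K) :
    uldcC Lw N K (K-1) = Lw * (1/(N:ℝ)) := by
  rw [uldcC, show K - (K-1) = 1 by omega, Finset.sum_range_one, pow_one]

end LDCLemmas

/-- Same interference property, Lemma 3, Property 2(a): in a capacity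
achieving ULDC, for every decoding set `S ∈ 𝒮_k`, distinct `i₁, i₂ ∈ S` and `k' ≠ k`,
the coded symbols `X_{i₁}` and `X_{i₂}` contain the same information about `W_{k'}`. -/
theorem uldc_same_interference (K N M : ℕ) (hK : 2 ≤ K) (hN : 2 ≤ N) (Lw Lx : ℝ)
    (hLw : 0 < Lw) (C : LDC K N M Lw Lx) (hU : C.IsUniversal)
    (hcap : Lw / Lx = Cstar N K)
    (k : Fin K) (S : Finset (Fin M)) (hS : S ∈ C.decSets k)
    (i₁ i₂ : Fin M) (h₁ : i₁ ∈ S) (h₂ : i₂ ∈ S) (hne : i₁ ≠ i₂)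
    (k' : Fin K) (hk' : k' ≠ k) :
    C.P.sameInfo (C.X i₁) (C.X i₂)
      (C.P.tuple fun j : {x // x ∈ ({k'}ᶜ : Finset (Fin K))} => C.W j.1) := by
  classical
  have hK0 : 0 < K := lt_of_lt_of_le two_pos hK
  have hN0 : 0 < N := lt_of_lt_of_le two_pos hN
  have hNR : (0:ℝ) < N := by exact_mod_cast hN0
  have hD : 0 < ∑ j ∈ Finset.range K, (1/(N:ℝ))^j := by
    apply Finset.sum_pos
    · intro t _
      positivity
    · exact ⟨0, Finset.mem_range.2 hK0⟩
  -- capacity: Lx = c₀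
  have hLx : Lx = uldcC Lw N K 0 := by
    rw [Cstar] at hcap
    have hC0 : 0 < (N:ℝ) / (∑ j ∈ Finset.range K, (1/(N:ℝ))^j) := div_pos hNR hD
    have hLx0 : Lx ≠ 0 := by
      intro h
      rw [h, div_zero] at hcap
      exact hC0.ne hcap
    have hcross : Lw * (∑ j ∈ Finset.range K, (1/(N:ℝ))^j) = (N:ℝ) * Lx := by
      have h2 : ∀ j ∈ Finset.range K, ((1:ℝ)/(N:ℝ))^j = (1/(N:ℝ))^j := fun _ _ => rfl
      exact (div_eq_div_iff hLx0 hD.ne').1 hcap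
    have e : ∑ t ∈ Finset.range K, (1/(N:ℝ))^(t+1)
        = (∑ t ∈ Finset.range K, (1/(N:ℝ))^t) * (1/(N:ℝ)) := by
      rw [Finset.sum_mul]
      apply Finset.sum_congr rfl
      intro t _
      rw [pow_succ]
    rw [uldcC, Nat.sub_zero, e]
    have e2 : Lw * ((∑ t ∈ Finset.range K, (1/(N:ℝ))^t) * (1/(N:ℝ)))
        = (Lw * (∑ t ∈ Finset.range K, (1/(N:ℝ))^t)) / (N:ℝ) := by ring
    rw [e2, hcross]
    field_simp
  -- MAIN A: conditional entropies are bounded by c_j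
  have mainA : ∀ j : ℕ, ∀ J : Finset (Fin K), J.card = j → ∀ m : Fin M,
      C.P.condH (C.X m) (C.WJ J) ≤ uldcC Lw N K j := by
    intro j
    induction j with
    | zero =>
      intro J hJ m
      obtain rfl : J = ∅ := Finset.card_eq_zero.1 hJ
      have h1 : C.P.condH (C.X m) (C.WJ ∅) = C.P.condH (C.X m) (fun _ => (0 : Fin 1)) :=
        FinProbSpace.condH_congr_right (Y := fun _ => (0 : Fin 1)) (Y' := C.WJ ∅)
          (f := fun _ => (fun j : {x // x ∈ (∅ : Finset (Fin K))} =>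
            absurd j.2 (Finset.notMem_empty j.1)))
          (g := fun _ => (0 : Fin 1))
          (fun ω => funext fun j => absurd j.2 (Finset.notMem_empty j.1))
          (fun ω => rfl) (C.X m)
      rw [h1, FinProbSpace.condH_unit, C.HX m]
      exact le_of_eq hLx
    | succ j ih =>
      intro J hJ m
      have hJne : J.Nonempty := Finset.card_pos.1 (by rw [hJ]; exact Nat.succ_pos j)
      obtain ⟨k0, hk0⟩ := hJne
      obtain ⟨S0, hS0, hmS0⟩ := hU m k0
      have hJeq : J = insert k0 (J.erase k0) := (Finset.insert_erase hk0).symm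
      have hk0e : k0 ∉ J.erase k0 := Finset.notMem_erase k0 J
      have hcard : (J.erase k0).card = j := by
        have := Finset.card_erase_of_mem hk0
        omega
      have hjK : j < K := by
        have hle : J.card ≤ K := by
          have := Finset.card_le_univ J
          simpa using this
        omega
      calc C.P.condH (C.X m) (C.WJ J) ≤ C.P.condH (C.XT S0) (C.WJ J) :=
          LDC.condH_le_XT C hmS0 _
        _ = C.P.condH (C.XT S0) (C.WJ (insert k0 (J.erase k0))) := by rw [← hJeq]
        _ = C.P.condH (C.XT S0) (C.WJ (J.erase k0)) - Lw := LDC.split C hk0e hS0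
        _ ≤ (∑ i ∈ S0, C.P.condH (C.X i) (C.WJ (J.erase k0))) - Lw := by
            linarith [LDC.condH_XT_le_sum C S0 (C.WJ (J.erase k0))]
        _ ≤ (∑ _i ∈ S0, uldcC Lw N K j) - Lw := by
            have hsum := Finset.sum_le_sum
              (fun i (_ : i ∈ S0) => ih (J.erase k0) hcard i)
            linarith
        _ = (N:ℝ) * uldcC Lw N K j - Lw := by
            rw [Finset.sum_const, C.decSets_card k0 S0 hS0, nsmul_eq_mul]
        _ = uldcC Lw N K (j+1) := uldcC_rec Lw hN0 hjK
  -- the complement of k'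
  set Jc : Finset (Fin K) := {k'}ᶜ with hJc
  have hJcK : Jc.card = K - 1 := by
    rw [hJc, Finset.card_compl, Finset.card_singleton, Fintype.card_fin]
  have hk'Jc : k' ∉ Jc := by simp [hJc]
  have cK1 : uldcC Lw N K (K-1) = Lw / N := by
    rw [uldcC_last Lw (le_trans one_le_two hK)]
    ring
  -- MAIN B: every coded symbol has conditional entropy exactly Lw/N given W_{k'-bar}
  have hup : ∀ m' : Fin M, C.P.condH (C.X m') (C.WJ Jc) ≤ Lw / N := by
    intro m'
    have := mainA (K-1) Jc hJcK m'
    rwa [cK1] at this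
  have mainB : ∀ m : Fin M, C.P.condH (C.X m) (C.WJ Jc) = Lw / N := by
    intro m
    obtain ⟨S', hS', hmS'⟩ := hU m k'
    have hlow : Lw ≤ C.P.condH (C.XT S') (C.WJ Jc) := by
      have hc1 := FinProbSpace.condH_chain (C.XT S') (C.W k') (C.WJ Jc)
      have hc2 := FinProbSpace.condH_chain (C.W k') (C.XT S') (C.WJ Jc)
      have hswap : C.P.condH (fun ω => (C.XT S' ω, C.W k' ω)) (C.WJ Jc)
          = C.P.condH (fun ω => (C.W k' ω, C.XT S' ω)) (C.WJ Jc) :=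
        FinProbSpace.condH_congr_left
          (X := fun ω => (C.W k' ω, C.XT S' ω)) (X' := fun ω => (C.XT S' ω, C.W k' ω))
          (f := fun u => (u.2, u.1)) (g := fun u => (u.2, u.1))
          (fun _ => rfl) (fun _ => rfl) _
      have hdec := LDC.decode_ext C hS' (C.WJ Jc)
      have hind := LDC.condH_W_WJ C hk'Jc
      have hnn := FinProbSpace.condH_nonneg (C.XT S')
        (fun ω => (C.W k' ω, C.WJ Jc ω))
      linarith
    have hsum := LDC.condH_XT_le_sum C S' (C.WJ Jc)
    have hcardS' : S'.card = N := C.decSets_card k' S' hS'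
    have hsplit : ∑ i ∈ S', C.P.condH (C.X i) (C.WJ Jc)
        = C.P.condH (C.X m) (C.WJ Jc) + ∑ i ∈ S'.erase m, C.P.condH (C.X i) (C.WJ Jc) :=
      (Finset.add_sum_erase S' _ hmS').symm
    have herase : ∑ i ∈ S'.erase m, C.P.condH (C.X i) (C.WJ Jc)
        ≤ ((N-1 : ℕ):ℝ) * (Lw/N) := by
      have hb := Finset.sum_le_card_nsmul (S'.erase m) _ (Lw/N) (fun i _ => hup i)
      rw [Finset.card_erase_of_mem hmS', hcardS'] at hb
      rwa [nsmul_eq_mul] at hb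
    have hcast : ((N-1:ℕ):ℝ) = (N:ℝ) - 1 := by
      rw [Nat.cast_sub (le_trans one_le_two hN)]
      simp
    have halg : ((N:ℝ)-1) * (Lw/N) = Lw - Lw/N := by
      field_simp
    rw [hcast, halg] at herase
    exact le_antisymm (hup m) (by linarith)
  -- the decoding set S of W_k has small conditional entropy given W_{k'-bar}
  have hkJc : k ∈ Jc := by
    rw [hJc, Finset.mem_compl, Finset.mem_singleton]
    exact fun h => hk' h.symm
  have hKK : K - 2 < K := by omega
  have hJe : Jc = insert k (Jc.erase k) := (Finset.insert_erase hkJc).symm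
  have hkJe : k ∉ Jc.erase k := Finset.notMem_erase k Jc
  have hcardJe : (Jc.erase k).card = K - 2 := by
    rw [Finset.card_erase_of_mem hkJc, hJcK]
    omega
  have hXTbound : C.P.condH (C.XT S) (C.WJ Jc) ≤ Lw / N := by
    have h1 : C.P.condH (C.XT S) (C.WJ Jc)
        = C.P.condH (C.XT S) (C.WJ (Jc.erase k)) - Lw := by
      conv_lhs => rw [hJe]
      exact LDC.split C hkJe hS
    have h2 := LDC.condH_XT_le_sum C S (C.WJ (Jc.erase k))
    have h4 := Finset.sum_le_sum
      (fun i (_ : i ∈ S) => mainA (K-2) (Jc.erase k) hcardJe i)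
    rw [Finset.sum_const, C.decSets_card k S hS, nsmul_eq_mul] at h4
    have h5 : (N:ℝ) * uldcC Lw N K (K-2) - Lw = uldcC Lw N K (K-2+1) :=
      uldcC_rec Lw hN0 hKK
    rw [show K - 2 + 1 = K - 1 by omega] at h5
    rw [h1]
    linarith [cK1]
  have hp12 : C.P.condH (fun ω => (C.X i₁ ω, C.X i₂ ω)) (C.WJ Jc) ≤ Lw/N :=
    le_trans (LDC.condH_pair_le_XT C h₁ h₂ (C.WJ Jc)) hXTbound
  have hp21 : C.P.condH (fun ω => (C.X i₂ ω, C.X i₁ ω)) (C.WJ Jc) ≤ Lw/N :=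
    le_trans (LDC.condH_pair_le_XT C h₂ h₁ (C.WJ Jc)) hXTbound
  have hchain12 := FinProbSpace.condH_chain (C.X i₁) (C.X i₂) (C.WJ Jc)
  have hchain21 := FinProbSpace.condH_chain (C.X i₂) (C.X i₁) (C.WJ Jc)
  have hB1 := mainB i₁
  have hB2 := mainB i₂
  have hz1 : C.P.condH (C.X i₁) (fun ω => (C.X i₂ ω, C.WJ Jc ω)) = 0 :=
    le_antisymm (by linarith) (FinProbSpace.condH_nonneg _ _)
  have hz2 : C.P.condH (C.X i₂) (fun ω => (C.X i₁ ω, C.WJ Jc ω)) = 0 :=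
    le_antisymm (by linarith) (FinProbSpace.condH_nonneg _ _)
  exact ⟨hz1, hz2⟩
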